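/- Let η > 0 and t > 0 and let K_η(t,·) be the OST kernel with Fourier transform ξ ↦ e^{iξ³t − ηt(|ξ|³−|ξ|)}. Then there is no ε > 0 and M > 0 with |K_η(t,x)| ≲ 1/|x|^{2+ε} for all |x| > M. Equivalently, the kernel cannot decay at infinity faster than 1/(1+|x|²). -/

import Mathlib

open MeasureTheory

noncomputable def ostSymbol (η t ξ : ℝ) : ℂ :=
  Complex.exp (Complex.I * ((ξ ^ 3 * t : ℝ) : ℂ) - ((η * t * (|ξ| ^ 3 - |ξ|) : ℝ) : ℂ))

noncomputable def ostKernel (η t x : ℝ) : ℂ :=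
  ∫ ξ : ℝ, Complex.exp (2 * Real.pi * Complex.I * ((x * ξ : ℝ) : ℂ)) * ostSymbol η t ξ

namespace OstAux

open MeasureTheory Real Filter Asymptotics
open scoped FourierTransform

lemma ostSymbol_norm (η t ξ : ℝ) :
    ‖ostSymbol η t ξ‖ = Real.exp (-(η * t * (|ξ| ^ 3 - |ξ|))) := by
  rw [ostSymbol, Complex.norm_exp]
  congr 1
  simp [Complex.sub_re, Complex.mul_re, ← Complex.ofReal_pow]

lemma ostSymbol_continuous (η t : ℝ) : Continuous (ostSymbol η t) := by
  unfold ostSymbol; fun_prop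

lemma integrable_exp_neg_mul_abs {b : ℝ} (hb : 0 < b) :
    Integrable fun x : ℝ => Real.exp (-b * |x|) := by
  have h1 : IntegrableOn (fun x : ℝ => Real.exp (-b * |x|)) (Set.Ici 0) := by
    rw [integrableOn_Ici_iff_integrableOn_Ioi]
    refine (exp_neg_integrableOn_Ioi 0 hb).congr_fun ?_ measurableSet_Ioi
    intro x hx; simp [abs_of_pos (Set.mem_Ioi.mp hx)]
  have h2 : IntegrableOn (fun x : ℝ => Real.exp (-b * |x|)) (Set.Iio 0) := by
    rw [← (Measure.measurePreserving_neg (volume : Measure ℝ)).integrableOn_comp_preimage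
      (Homeomorph.neg ℝ).measurableEmbedding]
    simp only [Function.comp_def, abs_neg, Set.neg_preimage, Set.neg_Iio, neg_zero]
    exact h1.mono_set Set.Ioi_subset_Ici_self
  rw [← integrableOn_univ, ← Set.Iio_union_Ici (a := (0:ℝ)), integrableOn_union]
  exact ⟨h2, h1⟩

lemma ostSymbol_integrable {η t : ℝ} (hη : 0 < η) (ht : 0 < t) :
    Integrable (ostSymbol η t) := by
  have hb : 0 < η * t := mul_pos hη ht
  refine ((integrable_exp_neg_mul_abs hb).const_mul (Real.exp (2 * η * t))).mono'
    (ostSymbol_continuous η t).aestronglyMeasurable (ae_of_all _ fun ξ => ?_)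
  rw [ostSymbol_norm, ← Real.exp_add]
  apply Real.exp_le_exp.2
  have h0 : 0 ≤ |ξ| := abs_nonneg ξ
  have key : 0 ≤ |ξ| ^ 3 - 2 * |ξ| + 2 := by
    nlinarith [sq_nonneg (|ξ| - 1), sq_nonneg |ξ|, sq_nonneg (|ξ| + 1)]
  nlinarith [mul_le_mul_of_nonneg_left key hb.le]

lemma ostKernel_eq (η t : ℝ) : ostKernel η t = 𝓕⁻ (ostSymbol η t) := by
  funext x
  rw [Real.fourierInv_eq']
  unfold ostKernel
  congr 1; funext ξ
  rw [smul_eq_mul]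
  congr 2
  rw [show ((inner ℝ ξ x : ℝ)) = ξ * x from by simp [RCLike.inner_apply, mul_comm]]
  push_cast
  ring

lemma symb_comp_neg_integrable {η t : ℝ} (hη : 0 < η) (ht : 0 < t) :
    Integrable fun x : ℝ => ostSymbol η t (-x) := by
  have hm := (Measure.measurePreserving_neg (volume : Measure ℝ)).map_eq
  exact Integrable.comp_measurable (f := Neg.neg) (g := ostSymbol η t)
    (by rw [hm]; exact ostSymbol_integrable hη ht) measurable_neg

lemma ostKernel_continuous {η t : ℝ} (hη : 0 < η) (ht : 0 < t) :
    Continuous (ostKernel η t) := by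
  rw [ostKernel_eq, Real.fourierInv_eq_fourier_comp_neg]
  exact VectorFourier.fourierIntegral_continuous Real.continuous_fourierChar
    (by exact continuous_inner) (symb_comp_neg_integrable hη ht)

lemma integrable_of_decay {f : ℝ → ℂ} (hf : Continuous f) {M C ε : ℝ} (hε : 0 < ε) (hM : 0 < M)
    (hd : ∀ x : ℝ, M < |x| → ‖f x‖ ≤ C / |x| ^ (1 + ε)) : Integrable f := by
  have hlt : -(1 + ε) < -1 := by linarith
  have hg : IntegrableOn (fun x : ℝ => |x| ^ (-(1 + ε))) (Set.Ioi M) := by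
    refine (integrableOn_Ioi_rpow_of_lt hlt hM).congr_fun ?_ measurableSet_Ioi
    intro x hx
    simp only []
    rw [abs_of_pos (hM.trans hx)]
  have hg' : IntegrableOn (fun x : ℝ => |x| ^ (-(1 + ε))) (Set.Iio (-M)) := by
    rw [← (Measure.measurePreserving_neg (volume : Measure ℝ)).integrableOn_comp_preimage
      (Homeomorph.neg ℝ).measurableEmbedding]
    simp only [Function.comp_def, abs_neg, Set.neg_preimage, Set.neg_Iio, neg_neg]
    exact hg
  have key : ∀ x : ℝ, M < |x| → ‖f x‖ ≤ |C| * ‖|x| ^ (-(1 + ε))‖ := by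
    intro x hx
    have hx0 : (0:ℝ) < |x| := hM.trans hx
    have h1 : ‖f x‖ ≤ C / |x| ^ (1 + ε) := hd x hx
    have h2 : C / |x| ^ (1 + ε) ≤ |C| / |x| ^ (1 + ε) := by
      gcongr
      exact le_abs_self C
    have h3 : |C| / |x| ^ (1 + ε) = |C| * ‖|x| ^ (-(1 + ε))‖ := by
      rw [Real.norm_eq_abs, abs_of_nonneg (rpow_nonneg (abs_nonneg x) _),
        rpow_neg (abs_nonneg x), div_eq_mul_inv]
    linarith [h1, h2, h3.le]
  have hOtop : f =O[atTop] fun x : ℝ => |x| ^ (-(1 + ε)) := by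
    rw [isBigO_iff]
    refine ⟨|C|, ?_⟩
    filter_upwards [eventually_gt_atTop M] with x hx
    exact key x (by rwa [abs_of_pos (hM.trans hx)])
  have hObot : f =O[atBot] fun x : ℝ => |x| ^ (-(1 + ε)) := by
    rw [isBigO_iff]
    refine ⟨|C|, ?_⟩
    filter_upwards [eventually_lt_atBot (-M)] with x hx
    have : M < |x| := by rw [abs_of_neg (by linarith)]; linarith
    exact key x this
  exact hf.locallyIntegrable.integrable_of_isBigO_atBot_atTop
    hObot ⟨Set.Iio (-M), Iio_mem_atBot _, hg'⟩ hOtop ⟨Set.Ioi M, Ioi_mem_atTop _, hg⟩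

lemma abs_cube_hasDerivAt : HasDerivAt (fun ξ : ℝ => |ξ| ^ 3) 0 0 := by
  rw [hasDerivAt_iff_isLittleO]
  simp only [sub_zero, smul_zero, abs_zero, zero_pow, ne_eq, OfNat.ofNat_ne_zero,
    not_false_eq_true, sub_zero]
  rw [Asymptotics.isLittleO_iff]
  intro c hc
  have h1 : Tendsto (fun ξ : ℝ => |ξ|) (nhds 0) (nhds 0) := by
    simpa using continuous_abs.tendsto (0:ℝ)
  filter_upwards [h1.eventually_lt_const (Real.sqrt_pos.2 hc)] with ξ hξ
  have h0 : 0 ≤ |ξ| := abs_nonneg ξ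
  have h2 : |ξ| ^ 2 ≤ c := by
    nlinarith [Real.sq_sqrt hc.le, Real.sqrt_nonneg c]
  calc ‖|ξ| ^ 3‖ = |ξ| ^ 2 * |ξ| := by
        rw [Real.norm_eq_abs, abs_of_nonneg (by positivity)]; ring
    _ ≤ c * ‖ξ‖ := by rw [Real.norm_eq_abs]; exact mul_le_mul_of_nonneg_right h2 h0

lemma ostSymbol_not_differentiableAt {η t : ℝ} (hη : 0 < η) (ht : 0 < t) :
    ¬ DifferentiableAt ℝ (ostSymbol η t) 0 := by
  intro hdiff
  set h : ℝ → ℂ := fun ξ =>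
    Complex.I * ((ξ ^ 3 * t : ℝ) : ℂ) - ((η * t * (|ξ| ^ 3 - |ξ|) : ℝ) : ℂ) with hh_def
  have him : ∀ ξ : ℝ, (h ξ).im = ξ ^ 3 * t := by
    intro ξ
    simp [hh_def, Complex.sub_im, Complex.mul_im, ← Complex.ofReal_pow]
  have hev : (fun ξ => Complex.log (ostSymbol η t ξ)) =ᶠ[nhds (0:ℝ)] h := by
    have htend : Tendsto (fun ξ : ℝ => |ξ ^ 3 * t|) (nhds 0) (nhds 0) := by
      have : Continuous fun ξ : ℝ => |ξ ^ 3 * t| := by fun_prop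
      simpa using this.tendsto (0:ℝ)
    filter_upwards [htend.eventually_lt_const Real.pi_pos] with ξ hξ
    have : ostSymbol η t ξ = Complex.exp (h ξ) := rfl
    rw [this, Complex.log_exp]
    · rw [him ξ]; linarith [abs_lt.1 hξ |>.1]
    · rw [him ξ]; linarith [abs_lt.1 hξ |>.2]
  have h1 : ostSymbol η t 0 = 1 := by simp [ostSymbol]
  have hlog : DifferentiableAt ℝ (fun ξ => Complex.log (ostSymbol η t ξ)) 0 := by
    have hld : DifferentiableAt ℂ Complex.log (ostSymbol η t 0) := by
      rw [h1]
      exact Complex.differentiableAt_log (by simp [Complex.mem_slitPlane_iff])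
    exact (hld.restrictScalars ℝ).comp 0 hdiff
  have hh : DifferentiableAt ℝ h 0 := hev.symm.differentiableAt_iff.mpr hlog
  have hre : DifferentiableAt ℝ (fun ξ : ℝ => -(η * t * (|ξ| ^ 3 - |ξ|))) 0 := by
    have hc : DifferentiableAt ℝ (fun ξ : ℝ => (h ξ).re) 0 :=
      (Complex.reCLM.differentiableAt).comp 0 hh
    have : (fun ξ : ℝ => (h ξ).re) = fun ξ : ℝ => -(η * t * (|ξ| ^ 3 - |ξ|)) := by
      funext ξ
      simp [hh_def, Complex.sub_re, Complex.mul_re, ← Complex.ofReal_pow]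
    rwa [this] at hc
  have habs : DifferentiableAt ℝ (fun ξ : ℝ => |ξ|) 0 := by
    have hne : η * t ≠ 0 := (mul_pos hη ht).ne'
    have heq : (fun ξ : ℝ => |ξ|) =
        fun ξ : ℝ => |ξ| ^ 3 + (1 / (η * t)) * (-(η * t * (|ξ| ^ 3 - |ξ|))) := by
      funext ξ
      field_simp
      ring
    rw [heq]
    exact abs_cube_hasDerivAt.differentiableAt.add (hre.const_mul _)
  exact not_differentiableAt_abs_zero habs

end OstAux

open Real Filter Asymptotics OstAux in
open scoped FourierTransform in
theorem stmt7 : ∀ η t : ℝ, 0 < η → 0 < t →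
    ¬ ∃ ε > (0:ℝ), ∃ M > (0:ℝ), ∃ C > (0:ℝ), ∀ x : ℝ, M < |x| →
      ‖ostKernel η t x‖ ≤ C / |x| ^ (2 + ε) := by
  intro η t hη ht
  rintro ⟨ε, hε, M, hM, C, hC, hd⟩
  have hKc : Continuous (ostKernel η t) := ostKernel_continuous hη ht
  -- integrability of the kernel
  have hK : Integrable (ostKernel η t) := by
    refine integrable_of_decay hKc (ε := 1 + ε) (C := C) (by linarith) hM fun x hx => ?_
    have := hd x hx
    rwa [show (1:ℝ) + (1 + ε) = 2 + ε by ring]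
  -- integrability of x • K x
  have hxK : Integrable fun x : ℝ => x • ostKernel η t x := by
    refine integrable_of_decay (by fun_prop) (ε := ε) (C := C) hε hM fun x hx => ?_
    have hx0 : (0:ℝ) < |x| := hM.trans hx
    have h1 : ‖x • ostKernel η t x‖ = |x| * ‖ostKernel η t x‖ := by
      rw [norm_smul, Real.norm_eq_abs]
    have h2 : |x| * ‖ostKernel η t x‖ ≤ |x| * (C / |x| ^ (2 + ε)) :=
      mul_le_mul_of_nonneg_left (hd x hx) (abs_nonneg x)
    have h3 : |x| * (C / |x| ^ (2 + ε)) = C / |x| ^ (1 + ε) := by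
      rw [show (2:ℝ) + ε = 1 + (1 + ε) by ring, Real.rpow_add hx0, Real.rpow_one]
      field_simp
    rw [h1]
    linarith [h2, h3.le]
  have hg : Integrable (ostSymbol η t) := ostSymbol_integrable hη ht
  -- the Fourier transform of the symbol is integrable
  have hFgK : 𝓕 (ostSymbol η t) = fun w => ostKernel η t (-w) := by
    funext w
    have := Real.fourierInv_eq_fourier_neg (ostSymbol η t) (-w)
    rw [neg_neg] at this
    rw [← this, ostKernel_eq]
  have hFg : Integrable (𝓕 (ostSymbol η t)) := by
    rw [hFgK]
    have hm := (Measure.measurePreserving_neg (volume : Measure ℝ)).map_eq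
    exact Integrable.comp_measurable (f := Neg.neg) (g := ostKernel η t)
      (by rwa [hm]) measurable_neg
  -- Fourier inversion : 𝓕 K = symbol
  have hinv : 𝓕 (ostKernel η t) = ostSymbol η t := by
    funext v
    rw [ostKernel_eq]
    exact hg.fourier_fourierInv_eq hFg (ostSymbol_continuous η t).continuousAt
  -- the symbol is differentiable at 0, contradiction
  have hdiff : DifferentiableAt ℝ (ostSymbol η t) 0 := by
    have := (Real.hasDerivAt_fourier hK hxK 0).differentiableAt
    rwa [hinv] at this
  exact ostSymbol_not_differentiableAt hη ht hdiff
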